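/- Let (X, ‖·‖) be a normal ordered normed space (i.e., semimonotone: there is M with 0 ≤ y ≤ x implying ‖y‖ ≤ M‖x‖). Then its nonstandard hull X̂ = fin(*X)/μ(*X), with the induced order ([κ] ≥ 0 iff κ ≈ ξ for some ξ ≥ 0 in *X) and norm ‖[x]‖ = st‖x‖, is a normal ordered Banach space with the same semimonotonicity constant M. -/
import Mathlib


open Filter

/-- The nonstandard extension `*Z` realized as the ultrapower `Germ (hyperfilter ℕ) Z`. -/
notation "γ*" Z => Germ ((hyperfilter ℕ : Ultrafilter ℕ) : Filter ℕ) Z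

/-- let `(X, ‖·‖)` be a normal (semimonotone with constant `M`) ordered
normed space with generating cone. Its nonstandard hull `X̂ = fin(*X)/μ(*X)` with the
induced order (`[κ] ≥ 0` iff `κ` is infinitely close to some `ξ ≥ 0`) and norm
`‖[x]‖ = st ‖x‖` is a normal ordered Banach space with the same constant `M`:
`0 ≤ [ξ] ≤ [κ]` implies `st ‖ξ‖ ≤ M · st ‖κ‖`, and the hull is norm complete
(stated on representatives). -/
theorem stmt19 {X : Type}
    [NormedAddCommGroup X] [PartialOrder X] [CovariantClass X X (· + ·) (· ≤ ·)]
    [NormedSpace ℝ X]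
    (hgen : ∀ x : X, ∃ u v : X, 0 ≤ u ∧ 0 ≤ v ∧ x = u - v)
    (M : ℝ) (hM : 0 ≤ M)
    (hsemi : ∀ x y : X, 0 ≤ y → y ≤ x → ‖y‖ ≤ M * ‖x‖) :
    let nstar : (γ* X) → (γ* ℝ) := Germ.map (fun x : X => ‖x‖)
    let fin : Set (γ* X) := {κ | ∃ r : ℝ, nstar κ ≤ (↑r : γ* ℝ)}
    let mu : Set (γ* X) := {κ | ∀ r : ℝ, 0 < r → nstar κ ≤ (↑r : γ* ℝ)}
    -- semimonotonicity (normality) of the hull with the same constant `M`: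
    (∀ κ ξ : γ* X, κ ∈ fin → ξ ∈ fin →
      (∃ ξ' : γ* X, 0 ≤ ξ' ∧ ξ - ξ' ∈ mu) →        -- `0 ≤ [ξ]`
      (∃ δ : γ* X, 0 ≤ δ ∧ (κ - ξ) - δ ∈ mu) →     -- `[ξ] ≤ [κ]`
      ∀ r s : ℝ,
        (∀ ε : ℝ, 0 < ε → |nstar ξ - (↑s : γ* ℝ)| ≤ (↑ε : γ* ℝ)) →  -- `s = st ‖ξ‖`
        (∀ ε : ℝ, 0 < ε → |nstar κ - (↑r : γ* ℝ)| ≤ (↑ε : γ* ℝ)) →  -- `r = st ‖κ‖`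
        s ≤ M * r) ∧
    -- the hull is a Banach space: every Cauchy sequence of classes converges:
    (∀ κ : ℕ → γ* X, (∀ n, κ n ∈ fin) →
      (∀ ε : ℝ, 0 < ε → ∃ N : ℕ, ∀ m n : ℕ, N ≤ m → N ≤ n →
        nstar (κ m - κ n) ≤ (↑ε : γ* ℝ)) →
      ∃ l : γ* X, l ∈ fin ∧ ∀ ε : ℝ, 0 < ε → ∃ N : ℕ, ∀ n : ℕ, N ≤ n →
        nstar (κ n - l) ≤ (↑ε : γ* ℝ)) := by
  classical
  intro nstar fin mu
  constructor
  · -- semimonotonicity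
    rintro κ ξ hκf hξf ⟨ξ', hξ'pos, hξμ⟩ ⟨δ, hδpos, hδμ⟩ r s hs hr
    obtain ⟨fκ, rfl⟩ : ∃ g : ℕ → X, (↑g : γ* X) = κ :=
      ⟨κ.out, by rw [← Germ.mk'_eq_coe]; exact Quotient.out_eq' κ⟩
    obtain ⟨fξ, rfl⟩ : ∃ g : ℕ → X, (↑g : γ* X) = ξ :=
      ⟨ξ.out, by rw [← Germ.mk'_eq_coe]; exact Quotient.out_eq' ξ⟩
    obtain ⟨fξ', rfl⟩ : ∃ g : ℕ → X, (↑g : γ* X) = ξ' :=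
      ⟨ξ'.out, by rw [← Germ.mk'_eq_coe]; exact Quotient.out_eq' ξ'⟩
    obtain ⟨fδ, rfl⟩ : ∃ g : ℕ → X, (↑g : γ* X) = δ :=
      ⟨δ.out, by rw [← Germ.mk'_eq_coe]; exact Quotient.out_eq' δ⟩
    apply le_of_forall_pos_le_add
    intro ε hε
    set ε0 : ℝ := ε / (3 * M + 3) with hε0def
    have h3M : (0:ℝ) < 3 * M + 3 := by linarith
    have hε0 : 0 < ε0 := div_pos hε h3M
    have hεeq : (3 * M + 3) * ε0 = ε := by
      rw [hε0def]; field_simp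
    -- translate hypotheses into eventual statements
    have E1 : ∀ᶠ k in ((hyperfilter ℕ : Ultrafilter ℕ) : Filter ℕ), s - ε0 ≤ ‖fξ k‖ := by
      have h := (abs_le.mp (hs ε0 hε0)).1
      have h' : ∀ᶠ k in ((hyperfilter ℕ : Ultrafilter ℕ) : Filter ℕ), -ε0 ≤ ‖fξ k‖ - s := h
      filter_upwards [h'] with k hk; linarith
    have E2 : ∀ᶠ k in ((hyperfilter ℕ : Ultrafilter ℕ) : Filter ℕ), ‖fκ k‖ ≤ r + ε0 := by
      have h := (abs_le.mp (hr ε0 hε0)).2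
      have h' : ∀ᶠ k in ((hyperfilter ℕ : Ultrafilter ℕ) : Filter ℕ), ‖fκ k‖ - r ≤ ε0 := h
      filter_upwards [h'] with k hk; linarith
    have E3 : ∀ᶠ k in ((hyperfilter ℕ : Ultrafilter ℕ) : Filter ℕ),
        ‖fξ k - fξ' k‖ ≤ ε0 := hξμ ε0 hε0
    have E4 : ∀ᶠ k in ((hyperfilter ℕ : Ultrafilter ℕ) : Filter ℕ),
        ‖fκ k - fξ k - fδ k‖ ≤ ε0 := hδμ ε0 hε0
    have E5 : ∀ᶠ k in ((hyperfilter ℕ : Ultrafilter ℕ) : Filter ℕ), (0:X) ≤ fξ' k := hξ'pos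
    have E6 : ∀ᶠ k in ((hyperfilter ℕ : Ultrafilter ℕ) : Filter ℕ), (0:X) ≤ fδ k := hδpos
    have key : ∃ k : ℕ, s - ε0 ≤ ‖fξ k‖ ∧ ‖fκ k‖ ≤ r + ε0 ∧ ‖fξ k - fξ' k‖ ≤ ε0 ∧
        ‖fκ k - fξ k - fδ k‖ ≤ ε0 ∧ (0:X) ≤ fξ' k ∧ (0:X) ≤ fδ k := by
      have := (((((E1.and E2).and E3).and E4).and E5).and E6).exists
      tauto
    obtain ⟨k, h1, h2, h3, h4, h5, h6⟩ := key
    -- pointwise reasoning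
    have hle : fξ' k ≤ fξ' k + fδ k := le_add_of_nonneg_right h6
    have hsm : ‖fξ' k‖ ≤ M * ‖fξ' k + fδ k‖ := hsemi _ _ h5 hle
    have heq : fξ' k + fδ k = fκ k - (fξ k - fξ' k) - (fκ k - fξ k - fδ k) := by abel
    have hn1 : ‖fκ k - (fξ k - fξ' k) - (fκ k - fξ k - fδ k)‖ ≤
        ‖fκ k - (fξ k - fξ' k)‖ + ‖fκ k - fξ k - fδ k‖ := norm_sub_le _ _
    have hn2 : ‖fκ k - (fξ k - fξ' k)‖ ≤ ‖fκ k‖ + ‖fξ k - fξ' k‖ := norm_sub_le _ _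
    have hT : ‖fξ' k + fδ k‖ ≤ r + 3 * ε0 := by
      rw [heq]; linarith
    have hMT : M * ‖fξ' k + fδ k‖ ≤ M * (r + 3 * ε0) := mul_le_mul_of_nonneg_left hT hM
    have hn3 : ‖fξ k‖ ≤ ‖fξ' k‖ + ‖fξ k - fξ' k‖ := by
      have := norm_add_le (fξ' k) (fξ k - fξ' k)
      simpa using this
    have hMε : 0 ≤ M * ε0 := mul_nonneg hM hε0.le
    nlinarith [hsm, hT, hMT, hn3, h1, h2, h3, hεeq, hMε]
  · -- completeness
    intro κ hfin hC
    choose f hf using fun n => (⟨(κ n).out, by rw [← Germ.mk'_eq_coe]; exact Quotient.out_eq' _⟩ :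
      ∃ g : ℕ → X, (↑g : γ* X) = κ n)
    choose N0 hN0 using fun j : ℕ => hC (1 / ((j:ℝ) + 1)) (by positivity)
    set N' : ℕ → ℕ := fun j => (Finset.range (j + 1)).sup N0 with hN'def
    have hN' : ∀ i j, i ≤ j → N0 i ≤ N' j := fun i j h =>
      Finset.le_sup (Finset.mem_range.mpr (by omega))
    have hP : ∀ i j, i ≤ j → ∀ᶠ k in ((hyperfilter ℕ : Ultrafilter ℕ) : Filter ℕ),
        ‖f (N' i) k - f (N' j) k‖ ≤ 1 / ((i:ℝ) + 1) := by
      intro i j hij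
      have h := hN0 i (N' i) (N' j) (hN' i i le_rfl) (hN' i j hij)
      rw [← hf (N' i), ← hf (N' j)] at h
      exact h
    set A : ℕ → Set ℕ := fun j =>
      {k | ∀ i ≤ j, ‖f (N' i) k - f (N' j) k‖ ≤ 1 / ((i:ℝ) + 1)} with hAdef
    have hA : ∀ j, ∀ᶠ k in ((hyperfilter ℕ : Ultrafilter ℕ) : Filter ℕ), k ∈ A j := by
      intro j
      have h : ∀ᶠ k in ((hyperfilter ℕ : Ultrafilter ℕ) : Filter ℕ),
          ∀ i ∈ Finset.range (j + 1), ‖f (N' i) k - f (N' j) k‖ ≤ 1 / ((i:ℝ) + 1) :=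
        (Filter.eventually_all_finset _).mpr fun i hi =>
          hP i j (by have := Finset.mem_range.mp hi; omega)
      filter_upwards [h] with k hk i hij
      exact hk i (Finset.mem_range.mpr (by omega))
    set jk : ℕ → ℕ := fun k => Nat.findGreatest (fun j => k ∈ A j) k with hjkdef
    set g : ℕ → X := fun k => f (N' (jk k)) k with hgdef
    have hkey : ∀ j, ∀ᶠ k in ((hyperfilter ℕ : Ultrafilter ℕ) : Filter ℕ),
        ‖f (N' j) k - g k‖ ≤ 1 / ((j:ℝ) + 1) := by
      intro j
      have hge : ∀ᶠ k in ((hyperfilter ℕ : Ultrafilter ℕ) : Filter ℕ), j ≤ k := by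
        have h : ∀ᶠ k in (cofinite : Filter ℕ), j ≤ k := by
          rw [Nat.cofinite_eq_atTop]; exact eventually_ge_atTop j
        exact h.filter_mono (hyperfilter_le_cofinite)
      filter_upwards [hge, hA j] with k hk hAk
      have h1 : j ≤ jk k := Nat.le_findGreatest hk hAk
      have h2 : k ∈ A (jk k) := Nat.findGreatest_spec (P := fun j => k ∈ A j) hk hAk
      exact h2 j h1
    refine ⟨(↑g : γ* X), ?_, ?_⟩
    · obtain ⟨r, hr⟩ := hfin (N' 0)
      rw [← hf (N' 0)] at hr
      refine ⟨r + 1, ?_⟩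
      have hr' : ∀ᶠ k in ((hyperfilter ℕ : Ultrafilter ℕ) : Filter ℕ),
          ‖f (N' 0) k‖ ≤ r := hr
      have goal : ∀ᶠ k in ((hyperfilter ℕ : Ultrafilter ℕ) : Filter ℕ),
          ‖g k‖ ≤ r + 1 := by
        filter_upwards [hr', hkey 0] with k h1 h2
        have h3 := abs_le.mp (abs_norm_sub_norm_le (f (N' 0) k) (g k))
        norm_num at h2
        linarith [h3.1]
      exact goal
    · intro ε hε
      obtain ⟨j, hj⟩ := exists_nat_one_div_lt (show (0:ℝ) < ε / 2 by linarith)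
      refine ⟨N' j, fun n hn => ?_⟩
      have hcau := hN0 j n (N' j) (le_trans (hN' j j le_rfl) hn) (hN' j j le_rfl)
      rw [← hf n, ← hf (N' j)] at hcau
      have hcau' : ∀ᶠ k in ((hyperfilter ℕ : Ultrafilter ℕ) : Filter ℕ),
          ‖f n k - f (N' j) k‖ ≤ 1 / ((j:ℝ) + 1) := hcau
      rw [← hf n]
      have goal : ∀ᶠ k in ((hyperfilter ℕ : Ultrafilter ℕ) : Filter ℕ),
          ‖f n k - g k‖ ≤ ε := by
        filter_upwards [hcau', hkey j] with k h1 h2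
        have htri : ‖f n k - g k‖ ≤ ‖f n k - f (N' j) k‖ + ‖f (N' j) k - g k‖ := by
          have := dist_triangle (f n k) (f (N' j) k) (g k)
          simpa [dist_eq_norm] using this
        linarith
      exact goal
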